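/- Combining the above: if u : (0,∞) → ℝ is bounded and measurable and the limit lim_{λ→0⁺} λ ∫_0^∞ e^{-λ t} u(t) dt = L exists, then lim_{T→∞} (1/T) ∫_0^T u(t) dt = L. -/

import Mathlib

open Real Set MeasureTheory Filter

/- change of variables -/
lemma image_exp_neg (l : ℝ) (hl : 0 < l) :
    (fun t => Real.exp (-l * t)) '' (Set.Ioi 0) = Set.Ioo 0 1 := by
  ext y
  constructor
  · rintro ⟨t, ht, rfl⟩
    exact ⟨Real.exp_pos _, by
      rw [Real.exp_lt_one_iff]
      have : (0:ℝ) < l * t := mul_pos hl ht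
      linarith⟩
  · rintro ⟨hy0, hy1⟩
    refine ⟨-Real.log y / l, ?_, ?_⟩
    · have : Real.log y < 0 := Real.log_neg hy0 hy1
      exact div_pos (by linarith) hl
    · show Real.exp (-l * (-Real.log y / l)) = y
      rw [show -l * (-Real.log y / l) = Real.log y by field_simp, Real.exp_log hy0]

lemma hasDeriv_exp_neg (l x : ℝ) :
    HasDerivAt (fun t => Real.exp (-l * t)) (-l * Real.exp (-l * x)) x := by
  have h1 : HasDerivAt (fun t : ℝ => -l * t) (-l) x := by
    simpa using (hasDerivAt_id x).const_mul (-l)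
  have h := (Real.hasDerivAt_exp (-l * x)).comp x h1
  simpa [Function.comp_def, mul_comm] using h

lemma chv (l : ℝ) (hl : 0 < l) (f : ℝ → ℝ) :
    ∫ x in Set.Ioo (0:ℝ) 1, f x
      = ∫ t in Set.Ioi (0:ℝ), (l * Real.exp (-l * t)) * f (Real.exp (-l * t)) := by
  rw [← image_exp_neg l hl]
  rw [MeasureTheory.integral_image_eq_integral_abs_deriv_smul measurableSet_Ioi
    (f' := fun t => -l * Real.exp (-l * t)) (fun x hx => (hasDeriv_exp_neg l x).hasDerivWithinAt)
    (fun a _ b _ hab => ?_) f]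
  · congr 1; ext t
    have h1 : -l * Real.exp (-l * t) ≤ 0 := by
      have := Real.exp_pos (-l * t); nlinarith
    rw [abs_of_nonpos h1, smul_eq_mul]; ring
  · have := Real.exp_injective hab
    have h2 : -l * a = -l * b := by exact_mod_cast this
    exact mul_left_cancel₀ (by simpa using hl.ne') h2

/- integrability lemmas -/
lemma integ_exp_u (u : ℝ → ℝ) (C : ℝ) (hb : ∀ t, |u t| ≤ C) (hm : Measurable u)
    {b : ℝ} (hbpos : 0 < b) :
    IntegrableOn (fun t => Real.exp (-b * t) * u t) (Set.Ioi (0:ℝ)) := by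
  apply Integrable.mono' ((exp_neg_integrableOn_Ioi 0 hbpos).const_mul C)
  · exact ((Real.measurable_exp.comp
      (measurable_const.mul measurable_id)).mul hm).aestronglyMeasurable
  · filter_upwards with t
    rw [norm_mul, Real.norm_eq_abs, Real.norm_eq_abs, abs_of_pos (Real.exp_pos _), mul_comm C]
    exact mul_le_mul_of_nonneg_left (hb t) (Real.exp_pos _).le

lemma bdd_integrableOn {φ : ℝ → ℝ} {M : ℝ} (hφ : Measurable φ)
    (hM : ∀ x ∈ Set.Ioo (0:ℝ) 1, |φ x| ≤ M) : IntegrableOn φ (Set.Ioo (0:ℝ) 1) := by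
  apply Integrable.mono' (integrableOn_const (by simp [Real.volume_Ioo]))
  · exact hφ.aestronglyMeasurable
  · filter_upwards [ae_restrict_mem measurableSet_Ioo] with x hx
    rw [Real.norm_eq_abs]; exact hM x hx

/- scaled Abel limits -/
lemma abel_scaled (u : ℝ → ℝ) (L : ℝ)
    (hlim : Tendsto (fun l : ℝ => l * ∫ t in Set.Ioi (0 : ℝ), Real.exp (-l * t) * u t)
      (nhdsWithin 0 (Set.Ioi 0)) (nhds L)) (μ : ℝ) (hμ : 0 < μ) :
    Tendsto (fun l : ℝ => l * ∫ t in Set.Ioi (0 : ℝ), Real.exp (-(μ * l) * t) * u t)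
      (nhdsWithin 0 (Set.Ioi 0)) (nhds (L / μ)) := by
  have hcomp : Tendsto (fun l : ℝ => μ * l) (nhdsWithin 0 (Set.Ioi 0))
      (nhdsWithin 0 (Set.Ioi 0)) := by
    apply tendsto_nhdsWithin_of_tendsto_nhds_of_eventually_within
    · have : Tendsto (fun l : ℝ => μ * l) (nhds 0) (nhds 0) := by
        simpa using ((continuous_id.const_mul μ).tendsto (0:ℝ))
      exact this.mono_left nhdsWithin_le_nhds
    · filter_upwards [self_mem_nhdsWithin] with l hl
      exact mul_pos hμ hl
  have h := (hlim.comp hcomp).const_mul (1/μ)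
  simp only [Function.comp_def] at h
  have h2 : Tendsto (fun l : ℝ => l * ∫ t in Set.Ioi (0 : ℝ), Real.exp (-(μ * l) * t) * u t)
      (nhdsWithin 0 (Set.Ioi 0)) (nhds (1/μ * L)) := by
    apply h.congr'
    filter_upwards [self_mem_nhdsWithin] with l hl
    have hl' : l ≠ 0 := ne_of_gt hl
    field_simp
  convert h2 using 2
  rw [div_eq_mul_one_div, mul_comm]

lemma poly_limit (u : ℝ → ℝ) (C : ℝ) (hb : ∀ t, |u t| ≤ C) (hm : Measurable u) (L : ℝ)
    (hlim : Tendsto (fun l : ℝ => l * ∫ t in Set.Ioi (0 : ℝ), Real.exp (-l * t) * u t)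
      (nhdsWithin 0 (Set.Ioi 0)) (nhds L)) (n : ℕ) (a : ℕ → ℝ) :
    Tendsto (fun l : ℝ => l * ∫ t in Set.Ioi (0 : ℝ),
        Real.exp (-l * t) * (∑ k ∈ Finset.range n, a k * (Real.exp (-l * t))^k) * u t)
      (nhdsWithin 0 (Set.Ioi 0)) (nhds (∑ k ∈ Finset.range n, a k * (L / (k+1)))) := by
  have key : ∀ l : ℝ, 0 < l →
      l * ∫ t in Set.Ioi (0 : ℝ),
        Real.exp (-l * t) * (∑ k ∈ Finset.range n, a k * (Real.exp (-l * t))^k) * u t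
      = ∑ k ∈ Finset.range n, a k * (l * ∫ t in Set.Ioi (0 : ℝ),
          Real.exp (-(((k:ℝ)+1) * l) * t) * u t) := by
    intro l hl
    have hpt : ∀ t : ℝ,
        Real.exp (-l * t) * (∑ k ∈ Finset.range n, a k * (Real.exp (-l * t))^k) * u t
        = ∑ k ∈ Finset.range n, a k * (Real.exp (-(((k:ℝ)+1) * l) * t) * u t) := by
      intro t
      rw [Finset.mul_sum, Finset.sum_mul]
      apply Finset.sum_congr rfl
      intro k _
      have : Real.exp (-(((k:ℝ)+1) * l) * t) = Real.exp (-l*t) * (Real.exp (-l*t))^k := by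
        rw [← Real.exp_nat_mul, ← Real.exp_add]
        congr 1; ring
      rw [this]; ring
    simp only [hpt]
    rw [MeasureTheory.integral_finset_sum]
    · rw [Finset.mul_sum]
      apply Finset.sum_congr rfl
      intro k _
      rw [MeasureTheory.integral_const_mul]
      ring
    · intro k _
      exact (integ_exp_u u C hb hm (by positivity)).const_mul (a k)
  have hsum : Tendsto (fun l : ℝ => ∑ k ∈ Finset.range n, a k * (l * ∫ t in Set.Ioi (0 : ℝ),
          Real.exp (-(((k:ℝ)+1) * l) * t) * u t))
      (nhdsWithin 0 (Set.Ioi 0)) (nhds (∑ k ∈ Finset.range n, a k * (L / (k+1)))) := by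
    apply tendsto_finset_sum
    intro k _
    exact (abel_scaled u L hlim ((k:ℝ)+1) (by positivity)).const_mul (a k)
  apply hsum.congr'
  filter_upwards [self_mem_nhdsWithin] with l hl
  exact (key l hl).symm

/- the Karamata kernel g -/
noncomputable def gfun : ℝ → ℝ := fun x => if Real.exp (-1) ≤ x then x⁻¹ else 0

lemma gfun_eq_indicator : gfun = Set.indicator (Set.Ici (Real.exp (-1))) (fun x => x⁻¹) := by
  ext x
  simp [gfun, Set.indicator, Set.mem_Ici]

lemma gfun_meas : Measurable gfun := by
  rw [gfun_eq_indicator]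
  exact Measurable.indicator measurable_inv measurableSet_Ici

lemma gfun_bound (x : ℝ) : |gfun x| ≤ Real.exp 1 := by
  unfold gfun
  split_ifs with h
  · have h0 : 0 < Real.exp (-1) := Real.exp_pos _
    rw [abs_of_nonneg (inv_nonneg.mpr (by linarith))]
    rw [show Real.exp 1 = (Real.exp (-1))⁻¹ by rw [← Real.exp_neg]; norm_num]
    exact inv_anti₀ h0 h
  · simp [(Real.exp_pos 1).le]

lemma gfun_integral : ∫ x in Set.Ioo (0:ℝ) 1, gfun x = 1 := by
  rw [gfun_eq_indicator, MeasureTheory.setIntegral_indicator measurableSet_Ici]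
  have hc0 : 0 < Real.exp (-1) := Real.exp_pos _
  have hc1 : Real.exp (-1) < 1 := by
    rw [Real.exp_lt_one_iff]; norm_num
  have : Set.Ioo (0:ℝ) 1 ∩ Set.Ici (Real.exp (-1)) = Set.Ico (Real.exp (-1)) 1 := by
    ext x
    simp only [Set.mem_inter_iff, Set.mem_Ioo, Set.mem_Ici, Set.mem_Ico]
    constructor
    · rintro ⟨⟨_, h2⟩, h3⟩; exact ⟨h3, h2⟩
    · rintro ⟨h1, h2⟩; exact ⟨⟨lt_of_lt_of_le hc0 h1, h2⟩, h1⟩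
  rw [this, MeasureTheory.integral_Ico_eq_integral_Ioo,
    ← MeasureTheory.integral_Ioc_eq_integral_Ioo,
    ← intervalIntegral.integral_of_le hc1.le, integral_inv_of_pos hc0 one_pos]
  rw [one_div, ← Real.exp_neg]
  simp [Real.log_exp]

lemma kernel_id (l t : ℝ) (hl : 0 < l) (ht : 0 < t) :
    Real.exp (-l * t) * gfun (Real.exp (-l * t))
      = Set.indicator (Set.Ioc (0:ℝ) l⁻¹) (fun _ => (1:ℝ)) t := by
  unfold gfun
  have hiff : Real.exp (-1) ≤ Real.exp (-l * t) ↔ t ≤ l⁻¹ := by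
    rw [Real.exp_le_exp, show (-1:ℝ) ≤ -l*t ↔ l*t ≤ 1 from by constructor <;> intro <;> linarith,
      mul_comm, inv_eq_one_div, le_div_iff₀ hl]
  rw [Set.indicator]
  split_ifs with h1 h2 h2
  · exact mul_inv_cancel₀ (Real.exp_pos _).ne'
  · exact absurd ⟨ht, hiff.mp h1⟩ h2
  · exact absurd (hiff.mpr h2.2) h1
  · simp

lemma cesaro_id (u : ℝ → ℝ) (hm : Measurable u) (l : ℝ) (hl : 0 < l) :
    ∫ t in Set.Ioi (0:ℝ), Real.exp (-l * t) * gfun (Real.exp (-l * t)) * u t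
      = ∫ t in (0:ℝ)..l⁻¹, u t := by
  have h1 : ∫ t in Set.Ioi (0:ℝ), Real.exp (-l * t) * gfun (Real.exp (-l * t)) * u t
      = ∫ t in Set.Ioi (0:ℝ), Set.indicator (Set.Ioc (0:ℝ) l⁻¹) u t := by
    apply MeasureTheory.setIntegral_congr_fun measurableSet_Ioi
    intro t ht
    show Real.exp (-l * t) * gfun (Real.exp (-l * t)) * u t = _
    rw [kernel_id l t hl ht]
    by_cases h : t ∈ Set.Ioc (0:ℝ) l⁻¹ <;> simp [Set.indicator, h]
  rw [h1, MeasureTheory.setIntegral_indicator measurableSet_Ioc,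
    show Set.Ioi (0:ℝ) ∩ Set.Ioc (0:ℝ) l⁻¹ = Set.Ioc (0:ℝ) l⁻¹ by
      rw [Set.inter_eq_right]; exact Set.Ioc_subset_Ioi_self,
    intervalIntegral.integral_of_le (inv_pos.mpr hl).le]

lemma poly_bd (n : ℕ) (a : ℕ → ℝ) {x : ℝ} (hx : |x| ≤ 1) :
    |∑ k ∈ Finset.range n, a k * x^k| ≤ ∑ k ∈ Finset.range n, |a k| := by
  refine le_trans (Finset.abs_sum_le_sum_abs _ _) (Finset.sum_le_sum fun k _ => ?_)
  rw [abs_mul]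
  nlinarith [abs_nonneg (a k), abs_nonneg (x^k), abs_pow x k,
    pow_le_one₀ (abs_nonneg x) hx (n := k)]

lemma err_bound (u : ℝ → ℝ) (C : ℝ) (hb : ∀ t, |u t| ≤ C) (hm : Measurable u)
    (l : ℝ) (hl : 0 < l) (n : ℕ) (a : ℕ → ℝ) :
    |l * (∫ t in (0:ℝ)..l⁻¹, u t)
      - l * ∫ t in Set.Ioi (0:ℝ),
          Real.exp (-l * t) * (∑ k ∈ Finset.range n, a k * (Real.exp (-l * t))^k) * u t|
      ≤ C * ∫ x in Set.Ioo (0:ℝ) 1, |gfun x - ∑ k ∈ Finset.range n, a k * x^k| := by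
  have hC0 : (0:ℝ) ≤ C := le_trans (abs_nonneg _) (hb 0)
  set p : ℝ → ℝ := fun x => ∑ k ∈ Finset.range n, a k * x^k with hp
  set Mp : ℝ := ∑ k ∈ Finset.range n, |a k| with hMp
  have hpm : Measurable p := by
    apply Finset.measurable_sum
    intro k _
    exact (measurable_id.pow_const k).const_mul (a k)
  have hexp : Measurable fun t : ℝ => Real.exp (-l * t) :=
    Real.measurable_exp.comp (measurable_const.mul measurable_id)
  have hA : IntegrableOn (fun t => Real.exp (-l * t) * gfun (Real.exp (-l * t)) * u t)
      (Set.Ioi (0:ℝ)) := by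
    apply Integrable.mono' ((exp_neg_integrableOn_Ioi 0 hl).const_mul (Real.exp 1 * C))
    · exact ((hexp.mul (gfun_meas.comp hexp)).mul hm).aestronglyMeasurable
    · filter_upwards with t
      rw [Real.norm_eq_abs, abs_mul, abs_mul, abs_of_pos (Real.exp_pos _)]
      calc Real.exp (-l*t) * |gfun (Real.exp (-l*t))| * |u t|
          ≤ Real.exp (-l*t) * Real.exp 1 * C := by
            apply mul_le_mul
            · exact mul_le_mul_of_nonneg_left (gfun_bound _) (Real.exp_pos _).le
            · exact hb t
            · exact abs_nonneg _
            · positivity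
        _ = Real.exp 1 * C * Real.exp (-l * t) := by ring
  have hB : IntegrableOn (fun t => Real.exp (-l * t) * p (Real.exp (-l * t)) * u t)
      (Set.Ioi (0:ℝ)) := by
    apply Integrable.mono' ((exp_neg_integrableOn_Ioi 0 hl).const_mul (Mp * C))
    · exact ((hexp.mul (hpm.comp hexp)).mul hm).aestronglyMeasurable
    · filter_upwards [ae_restrict_mem measurableSet_Ioi] with t ht
      have hx : |Real.exp (-l * t)| ≤ 1 := by
        rw [abs_of_pos (Real.exp_pos _)]
        rw [Real.exp_le_one_iff]
        have : 0 < l * t := mul_pos hl ht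
        linarith
      rw [Real.norm_eq_abs, abs_mul, abs_mul, abs_of_pos (Real.exp_pos _)]
      calc Real.exp (-l*t) * |p (Real.exp (-l*t))| * |u t|
          ≤ Real.exp (-l*t) * Mp * C := by
            apply mul_le_mul
            · exact mul_le_mul_of_nonneg_left (poly_bd n a hx) (Real.exp_pos _).le
            · exact hb t
            · exact abs_nonneg _
            · have : (0:ℝ) ≤ Mp := le_trans (abs_nonneg _) (poly_bd n a hx)
              positivity
        _ = Mp * C * Real.exp (-l * t) := by ring
  rw [← cesaro_id u hm l hl, ← mul_sub, ← MeasureTheory.integral_sub hA hB, abs_mul,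
    abs_of_pos hl]
  have hbound : ∀ᵐ t ∂(volume.restrict (Set.Ioi (0:ℝ))),
      ‖Real.exp (-l * t) * gfun (Real.exp (-l * t)) * u t
        - Real.exp (-l * t) * p (Real.exp (-l * t)) * u t‖
      ≤ Real.exp (-l * t) * |gfun (Real.exp (-l * t)) - p (Real.exp (-l * t))| * C := by
    filter_upwards with t
    rw [Real.norm_eq_abs,
      show Real.exp (-l * t) * gfun (Real.exp (-l * t)) * u t
        - Real.exp (-l * t) * p (Real.exp (-l * t)) * u t
        = Real.exp (-l * t) * ((gfun (Real.exp (-l * t)) - p (Real.exp (-l * t))) * u t) by ring,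
      abs_mul, abs_of_pos (Real.exp_pos _), abs_mul, mul_assoc]
    apply mul_le_mul_of_nonneg_left _ (Real.exp_pos _).le
    exact mul_le_mul_of_nonneg_left (hb t) (abs_nonneg _)
  have hbi : IntegrableOn
      (fun t => Real.exp (-l * t) * |gfun (Real.exp (-l * t)) - p (Real.exp (-l * t))| * C)
      (Set.Ioi (0:ℝ)) := by
    apply Integrable.mono' ((exp_neg_integrableOn_Ioi 0 hl).const_mul ((Real.exp 1 + Mp) * C))
    · exact ((hexp.mul ((gfun_meas.comp hexp).sub (hpm.comp hexp)).abs).mul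
        measurable_const).aestronglyMeasurable
    · filter_upwards [ae_restrict_mem measurableSet_Ioi] with t ht
      have hx : |Real.exp (-l * t)| ≤ 1 := by
        rw [abs_of_pos (Real.exp_pos _)]
        rw [Real.exp_le_one_iff]
        have : 0 < l * t := mul_pos hl ht
        linarith
      have habs : |gfun (Real.exp (-l * t)) - p (Real.exp (-l * t))| ≤ Real.exp 1 + Mp :=
        le_trans (abs_sub _ _) (add_le_add (gfun_bound _) (poly_bd n a hx))
      rw [Real.norm_eq_abs, abs_mul, abs_mul, abs_of_pos (Real.exp_pos _), abs_abs,
        abs_of_nonneg hC0]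
      calc Real.exp (-l*t) * |gfun (Real.exp (-l*t)) - p (Real.exp (-l*t))| * C
          ≤ Real.exp (-l*t) * (Real.exp 1 + Mp) * C := by
            apply mul_le_mul_of_nonneg_right _ hC0
            exact mul_le_mul_of_nonneg_left habs (Real.exp_pos _).le
        _ = (Real.exp 1 + Mp) * C * Real.exp (-l*t) := by ring
  have key := MeasureTheory.norm_integral_le_of_norm_le hbi hbound
  rw [Real.norm_eq_abs] at key
  calc l * |∫ t in Set.Ioi (0:ℝ), (Real.exp (-l * t) * gfun (Real.exp (-l * t)) * u t
        - Real.exp (-l * t) * p (Real.exp (-l * t)) * u t)|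
      ≤ l * ∫ t in Set.Ioi (0:ℝ),
          Real.exp (-l * t) * |gfun (Real.exp (-l * t)) - p (Real.exp (-l * t))| * C :=
        mul_le_mul_of_nonneg_left key hl.le
    _ = C * ∫ x in Set.Ioo (0:ℝ) 1, |gfun x - p x| := by
        rw [chv l hl (fun x => |gfun x - p x|), ← MeasureTheory.integral_const_mul,
          ← MeasureTheory.integral_const_mul]
        apply MeasureTheory.integral_congr_ae
        filter_upwards with t
        ring

lemma sum_close (L : ℝ) (n : ℕ) (a : ℕ → ℝ) :
    |(∑ k ∈ Finset.range n, a k * (L / (k+1))) - L|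
      ≤ |L| * ∫ x in Set.Ioo (0:ℝ) 1, |gfun x - ∑ k ∈ Finset.range n, a k * x^k| := by
  set p : ℝ → ℝ := fun x => ∑ k ∈ Finset.range n, a k * x^k with hp
  set Mp : ℝ := ∑ k ∈ Finset.range n, |a k| with hMp
  have hpm : Measurable p := by
    apply Finset.measurable_sum
    intro k _
    exact (measurable_id.pow_const k).const_mul (a k)
  have hxle : ∀ x ∈ Set.Ioo (0:ℝ) 1, |x| ≤ 1 := by
    intro x hx
    rw [abs_of_pos hx.1]
    exact hx.2.le
  have hpint : IntegrableOn p (Set.Ioo (0:ℝ) 1) :=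
    bdd_integrableOn hpm (fun x hx => poly_bd n a (hxle x hx))
  have hgint : IntegrableOn gfun (Set.Ioo (0:ℝ) 1) :=
    bdd_integrableOn gfun_meas (fun x _ => gfun_bound x)
  have hmono : ∀ k : ℕ, IntegrableOn (fun x : ℝ => a k * x ^ k) (Set.Ioo (0:ℝ) 1) := by
    intro k
    apply bdd_integrableOn (M := |a k|)
    · fun_prop
    · intro x hx
      rw [abs_mul, abs_pow]
      nlinarith [abs_nonneg (a k), abs_nonneg x,
        pow_le_one₀ (abs_nonneg x) (hxle x hx) (n := k)]
  have hIp : ∫ x in Set.Ioo (0:ℝ) 1, p x = ∑ k ∈ Finset.range n, a k * (1 / (k+1)) := by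
    simp only [hp]
    rw [MeasureTheory.integral_finset_sum _ (fun k _ => hmono k)]
    apply Finset.sum_congr rfl
    intro k _
    rw [MeasureTheory.integral_const_mul]
    congr 1
    rw [← MeasureTheory.integral_Ioc_eq_integral_Ioo,
      ← intervalIntegral.integral_of_le zero_le_one, integral_pow]
    norm_num
  have hdiff : (∑ k ∈ Finset.range n, a k * (L / (k+1))) - L
      = L * ∫ x in Set.Ioo (0:ℝ) 1, (p x - gfun x) := by
    rw [MeasureTheory.integral_sub hpint hgint, gfun_integral, hIp, mul_sub, mul_one,
      Finset.mul_sum]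
    congr 1
    apply Finset.sum_congr rfl
    intro k _
    ring
  rw [hdiff, abs_mul]
  apply mul_le_mul_of_nonneg_left _ (abs_nonneg L)
  calc |∫ x in Set.Ioo (0:ℝ) 1, (p x - gfun x)|
      ≤ ∫ x in Set.Ioo (0:ℝ) 1, |p x - gfun x| := by
        simpa [Real.norm_eq_abs] using
          MeasureTheory.norm_integral_le_integral_norm (μ := volume.restrict (Set.Ioo (0:ℝ) 1))
            (fun x => p x - gfun x)
    _ = ∫ x in Set.Ioo (0:ℝ) 1, |gfun x - p x| := by
        apply MeasureTheory.integral_congr_ae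
        filter_upwards with x
        exact abs_sub_comm _ _

lemma approx (ε : ℝ) (hε : 0 < ε) :
    ∃ (n : ℕ) (a : ℕ → ℝ),
      (∫ x in Set.Ioo (0:ℝ) 1, |gfun x - ∑ k ∈ Finset.range n, a k * x^k|) < ε := by
  set c := Real.exp (-1) with hc
  have hc0 : 0 < c := Real.exp_pos _
  have hcinv : c⁻¹ = Real.exp 1 := by rw [hc, ← Real.exp_neg]; norm_num
  set δ := ε / (4 * Real.exp 1) with hδ
  have hδ0 : 0 < δ := by positivity
  set r : ℝ → ℝ := fun x => max 0 (min 1 ((x - (c - δ)) / δ)) with hr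
  set h : ℝ → ℝ := fun x => r x * (max x c)⁻¹ with hh
  have hrcont : Continuous r :=
    continuous_const.max (continuous_const.min ((continuous_id.sub continuous_const).div_const δ))
  have hmaxpos : ∀ x : ℝ, (0:ℝ) < max x c := fun x => lt_of_lt_of_le hc0 (le_max_right x c)
  have hcont : Continuous h :=
    hrcont.mul ((continuous_id.max continuous_const).inv₀ (fun x => (hmaxpos x).ne'))
  have hr01 : ∀ x, 0 ≤ r x ∧ r x ≤ 1 := by
    intro x
    refine ⟨le_max_left _ _, ?_⟩
    rw [hr]
    simp only [max_le_iff]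
    exact ⟨zero_le_one, min_le_left _ _⟩
  have hhbd : ∀ x, |h x| ≤ Real.exp 1 := by
    intro x
    rw [hh, abs_mul, abs_of_nonneg (hr01 x).1, abs_of_nonneg (inv_nonneg.mpr (hmaxpos x).le),
      ← hcinv]
    calc r x * (max x c)⁻¹ ≤ 1 * c⁻¹ := by
          apply mul_le_mul (hr01 x).2 (inv_anti₀ hc0 (le_max_right x c))
            (inv_nonneg.mpr (hmaxpos x).le) zero_le_one
      _ = c⁻¹ := one_mul _
  have hpt : ∀ x ∈ Set.Ioo (0:ℝ) 1, |gfun x - h x|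
      ≤ Set.indicator (Set.Ioo (c - δ) c) (fun _ => Real.exp 1) x := by
    intro x _
    by_cases h1 : c ≤ x
    · have hgx : gfun x = x⁻¹ := if_pos h1
      have hrx : r x = 1 := by
        show (0:ℝ) ⊔ 1 ⊓ ((x - (c - δ)) / δ) = 1
        have : (1:ℝ) ≤ (x - (c - δ)) / δ := by
          rw [le_div_iff₀ hδ0]; linarith
        rw [min_eq_left this, max_eq_right zero_le_one]
      have : h x = x⁻¹ := by
        show r x * (x ⊔ c)⁻¹ = x⁻¹
        rw [hrx, one_mul, max_eq_left h1]
      rw [hgx, this, sub_self, abs_zero]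
      exact Set.indicator_nonneg (fun _ _ => (Real.exp_pos 1).le) x
    · push_neg at h1
      have hgx : gfun x = 0 := if_neg (not_le.mpr h1)
      by_cases h2 : x ≤ c - δ
      · have hrx : r x = 0 := by
          show (0:ℝ) ⊔ 1 ⊓ ((x - (c - δ)) / δ) = 0
          have hle : (x - (c - δ)) / δ ≤ 0 := by
            apply div_nonpos_of_nonpos_of_nonneg _ hδ0.le
            linarith
          exact max_eq_left (le_trans (min_le_right _ _) hle)
        have h0 : h x = 0 := by
          show r x * (x ⊔ c)⁻¹ = 0
          rw [hrx, zero_mul]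
        rw [hgx, h0, sub_self, abs_zero]
        exact Set.indicator_nonneg (fun _ _ => (Real.exp_pos 1).le) x
      · push_neg at h2
        have hx_mem : x ∈ Set.Ioo (c - δ) c := ⟨h2, h1⟩
        rw [Set.indicator_of_mem hx_mem, hgx, zero_sub, abs_neg]
        exact hhbd x
  have hI1int : IntegrableOn (fun x => |gfun x - h x|) (Set.Ioo (0:ℝ) 1) := by
    apply bdd_integrableOn (M := Real.exp 1 + Real.exp 1)
    · exact (gfun_meas.sub hcont.measurable).abs
    · intro x _
      rw [abs_abs]
      exact le_trans (abs_sub _ _) (add_le_add (gfun_bound x) (hhbd x))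
  have hindint : IntegrableOn (Set.indicator (Set.Ioo (c - δ) c) (fun _ => Real.exp 1))
      (Set.Ioo (0:ℝ) 1) := by
    apply bdd_integrableOn (M := Real.exp 1)
    · exact measurable_const.indicator measurableSet_Ioo
    · intro x _
      by_cases hx : x ∈ Set.Ioo (c - δ) c
      · rw [Set.indicator_of_mem hx, abs_of_pos (Real.exp_pos 1)]
      · rw [Set.indicator_of_notMem hx, abs_zero]
        exact (Real.exp_pos 1).le
  have hI1 : (∫ x in Set.Ioo (0:ℝ) 1, |gfun x - h x|) ≤ ε / 4 := by
    calc (∫ x in Set.Ioo (0:ℝ) 1, |gfun x - h x|)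
        ≤ ∫ x in Set.Ioo (0:ℝ) 1, Set.indicator (Set.Ioo (c - δ) c) (fun _ => Real.exp 1) x :=
          MeasureTheory.setIntegral_mono_on hI1int hindint measurableSet_Ioo hpt
      _ = ∫ x in Set.Ioo (0:ℝ) 1 ∩ Set.Ioo (c - δ) c, Real.exp 1 :=
          MeasureTheory.setIntegral_indicator measurableSet_Ioo
      _ = (volume (Set.Ioo (0:ℝ) 1 ∩ Set.Ioo (c - δ) c)).toReal * Real.exp 1 := by
          rw [MeasureTheory.setIntegral_const, smul_eq_mul, measureReal_def]
      _ ≤ δ * Real.exp 1 := by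
          apply mul_le_mul_of_nonneg_right _ (Real.exp_pos 1).le
          have hle : volume (Set.Ioo (0:ℝ) 1 ∩ Set.Ioo (c - δ) c) ≤ ENNReal.ofReal δ := by
            calc volume (Set.Ioo (0:ℝ) 1 ∩ Set.Ioo (c - δ) c)
                ≤ volume (Set.Ioo (c - δ) c) := measure_mono Set.inter_subset_right
              _ = ENNReal.ofReal δ := by rw [Real.volume_Ioo]; congr 1; ring
          calc (volume (Set.Ioo (0:ℝ) 1 ∩ Set.Ioo (c - δ) c)).toReal
              ≤ (ENNReal.ofReal δ).toReal := ENNReal.toReal_mono ENNReal.ofReal_ne_top hle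
            _ = δ := ENNReal.toReal_ofReal hδ0.le
      _ = ε / 4 := by
          rw [hδ]
          field_simp
  obtain ⟨q, hq⟩ := exists_polynomial_near_of_continuousOn 0 1 h hcont.continuousOn
    (ε/4) (by positivity)
  refine ⟨q.natDegree + 1, fun k => q.coeff k, ?_⟩
  have heval : ∀ x : ℝ, q.eval x = ∑ k ∈ Finset.range (q.natDegree + 1), q.coeff k * x^k := by
    intro x
    exact Polynomial.eval_eq_sum_range x
  have hqbd : ∀ x ∈ Set.Ioo (0:ℝ) 1, |q.eval x| ≤ Real.exp 1 + ε/4 := by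
    intro x hx
    have := hq x (Set.mem_Icc.mpr ⟨hx.1.le, hx.2.le⟩)
    calc |q.eval x| = |h x + (q.eval x - h x)| := by ring_nf
      _ ≤ |h x| + |q.eval x - h x| := abs_add_le _ _
      _ ≤ Real.exp 1 + ε/4 := add_le_add (hhbd x) this.le
  have hqint : IntegrableOn (fun x => |gfun x - q.eval x|) (Set.Ioo (0:ℝ) 1) := by
    apply bdd_integrableOn (M := Real.exp 1 + (Real.exp 1 + ε/4))
    · exact (gfun_meas.sub (q.continuous_aeval.measurable)).abs
    · intro x hx
      rw [abs_abs]
      exact le_trans (abs_sub _ _) (add_le_add (gfun_bound x) (hqbd x hx))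
  have hsumint : IntegrableOn (fun x => |gfun x - h x| + ε/4) (Set.Ioo (0:ℝ) 1) :=
    hI1int.add (integrableOn_const (by simp [Real.volume_Ioo]))
  calc (∫ x in Set.Ioo (0:ℝ) 1, |gfun x - ∑ k ∈ Finset.range (q.natDegree+1), q.coeff k * x^k|)
      = ∫ x in Set.Ioo (0:ℝ) 1, |gfun x - q.eval x| := by
        apply MeasureTheory.integral_congr_ae
        filter_upwards with x
        rw [heval x]
    _ ≤ ∫ x in Set.Ioo (0:ℝ) 1, (|gfun x - h x| + ε/4) := by
        apply MeasureTheory.setIntegral_mono_on hqint hsumint measurableSet_Ioo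
        intro x hx
        have h1 : |gfun x - q.eval x| ≤ |gfun x - h x| + |h x - q.eval x| := abs_sub_le _ _ _
        have h2 : |h x - q.eval x| ≤ ε/4 := by
          rw [abs_sub_comm]
          exact (hq x (Set.mem_Icc.mpr ⟨hx.1.le, hx.2.le⟩)).le
        linarith
    _ = (∫ x in Set.Ioo (0:ℝ) 1, |gfun x - h x|) + ε/4 := by
        rw [MeasureTheory.integral_add hI1int
          (integrableOn_const (by simp [Real.volume_Ioo]))]
        rw [MeasureTheory.setIntegral_const, smul_eq_mul, measureReal_def, Real.volume_Ioo]
        norm_num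
    _ ≤ ε/4 + ε/4 := by linarith
    _ < ε := by linarith

theorem tauberian_cesaro_of_abel (u : ℝ → ℝ) (C : ℝ) (hb : ∀ t, |u t| ≤ C)
    (hm : Measurable u) (L : ℝ)
    (hlim : Tendsto (fun l : ℝ => l * ∫ t in Set.Ioi (0 : ℝ), Real.exp (-l * t) * u t)
      (nhdsWithin 0 (Set.Ioi 0)) (nhds L)) :
    Tendsto (fun T : ℝ => (1 / T) * ∫ t in (0 : ℝ)..T, u t) atTop (nhds L) := by
  have hC0 : (0:ℝ) ≤ C := le_trans (abs_nonneg _) (hb 0)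
  have main : Tendsto (fun l : ℝ => l * ∫ t in (0:ℝ)..l⁻¹, u t)
      (nhdsWithin 0 (Set.Ioi 0)) (nhds L) := by
    rw [Metric.tendsto_nhds]
    intro ε hε
    set K := C + |L| + 1 with hK
    have hKpos : 0 < K := by positivity
    obtain ⟨n, a, hI⟩ := approx (ε/(2*K)) (by positivity)
    set I := ∫ x in Set.Ioo (0:ℝ) 1, |gfun x - ∑ k ∈ Finset.range n, a k * x^k| with hIdef
    have hInn : 0 ≤ I := MeasureTheory.integral_nonneg (fun x => abs_nonneg _)
    have hP := poly_limit u C hb hm L hlim n a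
    rw [Metric.tendsto_nhds] at hP
    filter_upwards [hP (ε/2) (by positivity), self_mem_nhdsWithin] with l hPl hl
    rw [Real.dist_eq] at hPl ⊢
    have h1 := err_bound u C hb hm l hl n a
    have h2 := sum_close L n a
    rw [← hIdef] at h1 h2
    have htri : |l * (∫ t in (0:ℝ)..l⁻¹, u t) - L|
        ≤ |l * (∫ t in (0:ℝ)..l⁻¹, u t)
            - l * ∫ t in Set.Ioi (0:ℝ),
                Real.exp (-l * t) * (∑ k ∈ Finset.range n, a k * (Real.exp (-l * t))^k) * u t|
          + |(l * ∫ t in Set.Ioi (0:ℝ),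
                Real.exp (-l * t) * (∑ k ∈ Finset.range n, a k * (Real.exp (-l * t))^k) * u t)
              - (∑ k ∈ Finset.range n, a k * (L / (k+1)))|
          + |(∑ k ∈ Finset.range n, a k * (L / (k+1))) - L| := by
      apply le_trans (abs_sub_le _ (∑ k ∈ Finset.range n, a k * (L / (k+1))) _)
      have := abs_sub_le (l * (∫ t in (0:ℝ)..l⁻¹, u t))
        (l * ∫ t in Set.Ioi (0:ℝ),
          Real.exp (-l * t) * (∑ k ∈ Finset.range n, a k * (Real.exp (-l * t))^k) * u t)
        (∑ k ∈ Finset.range n, a k * (L / (k+1)))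
      linarith
    have hCL : (C + |L|) * I < ε/2 := by
      have h3 : (C + |L|) * I ≤ (C + |L|) * (ε/(2*K)) :=
        mul_le_mul_of_nonneg_left hI.le (by positivity)
      have h4 : (C + |L|) * (ε/(2*K)) < K * (ε/(2*K)) :=
        mul_lt_mul_of_pos_right (by rw [hK]; linarith) (by positivity)
      have h5 : K * (ε/(2*K)) = ε/2 := by field_simp
      linarith
    have hCI : C * I ≤ C * (ε/(2*K)) := mul_le_mul_of_nonneg_left hI.le hC0
    nlinarith [abs_nonneg L, mul_le_mul_of_nonneg_left hI.le (abs_nonneg L)]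
  have hinv : Tendsto (fun T : ℝ => T⁻¹) atTop (nhdsWithin 0 (Set.Ioi 0)) := by
    apply tendsto_nhdsWithin_of_tendsto_nhds_of_eventually_within
    · exact tendsto_inv_atTop_zero
    · filter_upwards [eventually_gt_atTop 0] with T hT using inv_pos.mpr hT
  have hfin := main.comp hinv
  apply hfin.congr'
  filter_upwards [eventually_gt_atTop 0] with T hT
  simp only [Function.comp_def, inv_inv, one_div]
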